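/- (Proposition 2, unified interval-censored form.) Fix n ≥ 1 and half-open censoring intervals (L_i, R_i] for i = 1,…,n, where L_i ∈ ℝ and R_i ∈ ℝ ∪ {+∞} with L_i < R_i. Call a bijection σ : {1,…,n} → {1,…,n} an achievable rank vector if there exists an injective map w : {1,…,n} → ℝ with L_i < w_i for all i, w_i ≤ R_i whenever R_i is finite, and σ(i) = #{j : w_j < w_i} + 1 for all i. Then for every index i, the set of achievable ranks {σ(i) : σ achievable} equals the integer interval {r : #{j : R_j ≤ L_i} + 1 ≤ r ≤ #{j : L_j < R_i}}, where the condition R_j ≤ L_i is taken to be false when R_j = +∞ and L_j < R_i is taken to be true when R_i = +∞. -/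

import Mathlib

open Finset

lemma infinite_aux (lo : ℝ) (hi : EReal) (h : (lo : EReal) < hi) :
    {x : ℝ | lo < x ∧ (x : EReal) < hi}.Infinite := by
  obtain ⟨v, hv1, hv2⟩ := EReal.lt_iff_exists_real_btwn.mp h
  have hlv : lo < v := by exact_mod_cast hv1
  refine (Set.Ioo_infinite hlv).mono ?_
  rintro x ⟨h1, h2⟩
  exact ⟨h1, lt_trans (by exact_mod_cast h2) hv2⟩

lemma exists_injOn_choice {ι : Type*} [DecidableEq ι] (s : Finset ι) (T : ι → Set ℝ)
    (hT : ∀ j ∈ s, (T j).Infinite) :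
    ∃ f : ι → ℝ, Set.InjOn f ↑s ∧ ∀ j ∈ s, f j ∈ T j := by
  induction s using Finset.induction with
  | empty => exact ⟨fun _ => 0, by simp, by simp⟩
  | @insert j s hj ih =>
    obtain ⟨f, hinj, hmem⟩ := ih (fun k hk => hT k (Finset.mem_insert_of_mem hk))
    have : (T j \ (f '' ↑s)).Nonempty := by
      have := (hT j (Finset.mem_insert_self j s)).diff
        (Set.Finite.image f s.finite_toSet)
      exact this.nonempty
    obtain ⟨x, hxT, hxim⟩ := this
    refine ⟨Function.update f j x, ?_, ?_⟩
    · intro a ha b hb hab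
      simp only [Finset.coe_insert, Set.mem_insert_iff] at ha hb
      rcases ha with rfl | ha <;> rcases hb with rfl | hb
      · rfl
      · have hbj : b ≠ a := fun h => hj (by rw [← h]; exact hb)
        rw [Function.update_self, Function.update_of_ne hbj] at hab
        exact absurd ⟨b, hb, hab.symm⟩ hxim
      · have haj : a ≠ b := fun h => hj (by rw [← h]; exact ha)
        rw [Function.update_self, Function.update_of_ne haj] at hab
        exact absurd ⟨a, ha, hab⟩ hxim
      · have haj : a ≠ j := fun h => hj (by rw [← h]; exact ha)
        have hbj : b ≠ j := fun h => hj (by rw [← h]; exact hb)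
        rw [Function.update_of_ne haj, Function.update_of_ne hbj] at hab
        exact hinj ha hb hab
    · intro k hk
      rcases Finset.mem_insert.mp hk with rfl | hk
      · simpa using hxT
      · have hkj : k ≠ j := fun h => hj (h ▸ hk)
        rw [Function.update_of_ne hkj]
        exact hmem k hk

lemma exists_min_subset {ι : Type*} [DecidableEq ι] (B : Finset ι) (g : ι → ℝ) :
    ∀ m, m ≤ B.card → ∃ S ⊆ B, S.card = m ∧ ∀ j ∈ S, ∀ k ∈ B \ S, g j ≤ g k := by
  intro m
  induction m with
  | zero => exact fun _ => ⟨∅, Finset.empty_subset _, rfl, by simp⟩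
  | succ m ih =>
    intro hm
    obtain ⟨S, hSB, hcard, hmin⟩ := ih (Nat.le_of_succ_le hm)
    have hne : (B \ S).Nonempty := by
      rw [← Finset.card_pos, Finset.card_sdiff_of_subset hSB, hcard]
      omega
    obtain ⟨j0, hj0, hj0min⟩ := Finset.exists_min_image (B \ S) g hne
    refine ⟨insert j0 S, ?_, ?_, ?_⟩
    · exact Finset.insert_subset (Finset.mem_sdiff.mp hj0).1 hSB
    · rw [Finset.card_insert_of_notMem (Finset.mem_sdiff.mp hj0).2, hcard]
    · intro j hj k hk
      have hk' : k ∈ B \ S := by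
        rw [Finset.mem_sdiff] at hk ⊢
        exact ⟨hk.1, fun h => hk.2 (Finset.mem_insert_of_mem h)⟩
      rcases Finset.mem_insert.mp hj with rfl | hj
      · exact hj0min k hk'
      · exact hmin j hj k hk'

lemma natcard_eq_filter {n : ℕ} (p : Fin n → Prop) [DecidablePred p] :
    Nat.card {j : Fin n // p j} = (Finset.univ.filter p).card := by
  rw [Nat.card_eq_fintype_card, Fintype.card_subtype]

lemma rank_perm {n : ℕ} (w : Fin n → ℝ) (hw : Function.Injective w) :
    ∃ σ : Equiv.Perm (Fin n),
      ∀ k, (σ k : ℕ) = (Finset.univ.filter (fun j => w j < w k)).card := by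
  have hlt : ∀ k : Fin n, (Finset.univ.filter (fun j => w j < w k)).card < n := by
    intro k
    have hsub : (Finset.univ.filter (fun j => w j < w k)) ⊆ Finset.univ.erase k := by
      intro j hj
      simp only [Finset.mem_filter] at hj
      exact Finset.mem_erase.mpr ⟨fun h => absurd (h ▸ hj.2) (lt_irrefl _), Finset.mem_univ _⟩
    calc (Finset.univ.filter (fun j => w j < w k)).card ≤ (Finset.univ.erase k).card :=
          Finset.card_le_card hsub
      _ < Finset.univ.card := Finset.card_erase_lt_of_mem (Finset.mem_univ k)
      _ = n := Finset.card_univ.trans (Fintype.card_fin n)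
  set ρ : Fin n → Fin n := fun k => ⟨_, hlt k⟩ with hρ
  have hmono : ∀ {a b : Fin n}, w a < w b → (ρ a : ℕ) < (ρ b : ℕ) := by
    intro a b hab
    show (Finset.univ.filter (fun j => w j < w a)).card < (Finset.univ.filter (fun j => w j < w b)).card
    apply Finset.card_lt_card
    constructor
    · intro j hj
      simp only [Finset.mem_filter] at hj ⊢
      exact ⟨hj.1, hj.2.trans hab⟩
    · intro hsub
      have : a ∈ Finset.univ.filter (fun j => w j < w b) := by
        simp only [Finset.mem_filter]; exact ⟨Finset.mem_univ _, hab⟩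
      have := hsub this
      simp only [Finset.mem_filter] at this
      exact absurd this.2 (lt_irrefl _)
  have hinj : Function.Injective ρ := by
    intro a b hab
    by_contra hne
    rcases lt_or_gt_of_ne (fun h : w a = w b => hne (hw h)) with h | h
    · exact absurd (hab ▸ hmono h) (lt_irrefl _)
    · exact absurd (hab ▸ hmono h) (lt_irrefl _)
  exact ⟨Equiv.ofBijective ρ (Finite.injective_iff_bijective.mp hinj), fun k => rfl⟩

lemma coe_max_lt {a b : ℝ} {c : EReal} (ha : (a : EReal) < c) (hb : (b : EReal) < c) :
    ((max a b : ℝ) : EReal) < c := by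
  rcases max_cases a b with ⟨h, _⟩ | ⟨h, _⟩ <;> rw [h] <;> assumption

/-- Proposition 2, unified interval-censored form: given censoring intervals
`(L i, R i]` with `L i < R i ≤ +∞`, the set of achievable ranks of observation
`i`, over all injective choices of true values `w j ∈ (L j, R j]`, is the
integer interval from `#{j : R j ≤ L i} + 1` to `#{j : L j < R i}`. -/
theorem interval_censored_ranks
    (n : ℕ) (hn : 1 ≤ n) (L : Fin n → ℝ) (R : Fin n → EReal)
    (hLR : ∀ j : Fin n, (L j : EReal) < R j) (i : Fin n) :
    ∀ r : ℕ,
      (∃ σ : Equiv.Perm (Fin n),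
        (∃ w : Fin n → ℝ, Function.Injective w ∧
          (∀ j : Fin n, L j < w j) ∧
          (∀ j : Fin n, (w j : EReal) ≤ R j) ∧
          (∀ k : Fin n, (σ k : ℕ) = Nat.card {j : Fin n // w j < w k})) ∧
        r = (σ i : ℕ) + 1) ↔
      (Nat.card {j : Fin n // R j ≤ (L i : EReal)} + 1 ≤ r ∧
       r ≤ Nat.card {j : Fin n // (L j : EReal) < R i}) := by
  classical
  intro r
  set A : Finset (Fin n) := Finset.univ.filter (fun j => R j ≤ (L i : EReal)) with hA
  set Bb : Finset (Fin n) := Finset.univ.filter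
    (fun j => j ≠ i ∧ (L i : EReal) < R j ∧ (L j : EReal) < R i) with hBb
  set Gb : Finset (Fin n) := Finset.univ.filter (fun j => (L j : EReal) < R i) with hGb
  have hcardA : Nat.card {j : Fin n // R j ≤ (L i : EReal)} = A.card := natcard_eq_filter _
  have hcardG : Nat.card {j : Fin n // (L j : EReal) < R i} = Gb.card := natcard_eq_filter _
  have hiA : i ∉ A := by
    simp only [hA, Finset.mem_filter, Finset.mem_univ, true_and]
    exact fun h => absurd (hLR i) (not_lt.mpr h)
  have hiBb : i ∉ Bb := by
    simp only [hBb, Finset.mem_filter, Finset.mem_univ, true_and]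
    exact fun h => h.1 rfl
  have hABb : Disjoint A Bb := by
    rw [Finset.disjoint_left]
    intro j hjA hjB
    simp only [hA, Finset.mem_filter, Finset.mem_univ, true_and] at hjA
    simp only [hBb, Finset.mem_filter, Finset.mem_univ, true_and] at hjB
    exact absurd (lt_of_lt_of_le hjB.2.1 hjA) (lt_irrefl _)
  have hGeq : Gb = insert i (A ∪ Bb) := by
    ext j
    simp only [hGb, hA, hBb, Finset.mem_filter, Finset.mem_univ, true_and,
      Finset.mem_insert, Finset.mem_union]
    constructor
    · intro hj
      by_cases hji : j = i
      · exact Or.inl hji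
      by_cases hjR : R j ≤ (L i : EReal)
      · exact Or.inr (Or.inl hjR)
      · exact Or.inr (Or.inr ⟨hji, not_le.mp hjR, hj⟩)
    · rintro (rfl | hjA | hjB)
      · exact hLR _
      · exact lt_trans ((hLR j).trans_le hjA) (hLR i)
      · exact hjB.2.2
  have hGcard : Gb.card = A.card + Bb.card + 1 := by
    rw [hGeq, Finset.card_insert_of_notMem (by
      simp only [Finset.mem_union]; exact fun h => h.elim hiA hiBb),
      Finset.card_union_of_disjoint hABb]
  rw [hcardA, hcardG]
  constructor
  · -- forward direction
    rintro ⟨σ, ⟨w, hwinj, hwL, hwR, hσ⟩, rfl⟩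
    have hσi : (σ i : ℕ) = (Finset.univ.filter (fun j => w j < w i)).card := by
      rw [hσ i, natcard_eq_filter]
    set F := Finset.univ.filter (fun j => w j < w i) with hF
    have hiF : i ∉ F := by
      simp only [hF, Finset.mem_filter]
      exact fun h => absurd h.2 (lt_irrefl _)
    have hAF : A ⊆ F := by
      intro j hj
      simp only [hA, Finset.mem_filter, Finset.mem_univ, true_and] at hj
      simp only [hF, Finset.mem_filter, Finset.mem_univ, true_and]
      have h1 : (w j : EReal) ≤ (L i : EReal) := le_trans (hwR j) hj
      have h2 : w j ≤ L i := by exact_mod_cast h1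
      exact lt_of_le_of_lt h2 (hwL i)
    have hFG : insert i F ⊆ Gb := by
      intro j hj
      simp only [hGb, Finset.mem_filter, Finset.mem_univ, true_and]
      rcases Finset.mem_insert.mp hj with rfl | hj
      · exact hLR j
      · simp only [hF, Finset.mem_filter, Finset.mem_univ, true_and] at hj
        calc (L j : EReal) < (w j : EReal) := by exact_mod_cast hwL j
          _ < (w i : EReal) := by exact_mod_cast hj
          _ ≤ R i := hwR i
    constructor
    · have := Finset.card_le_card hAF
      omega
    · have h3 : F.card + 1 = (insert i F).card := (Finset.card_insert_of_notMem hiF).symm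
      have := Finset.card_le_card hFG
      omega
  · -- backward direction
    rintro ⟨h1, h2⟩
    set m := r - 1 - A.card with hm
    have hmB : m ≤ Bb.card := by omega
    obtain ⟨S, hSB, hScard, hSmin⟩ := exists_min_subset Bb L m hmB
    have hiS : i ∉ S := fun h => hiBb (hSB h)
    -- facts about Bb members
    have hBmem : ∀ j ∈ Bb, j ≠ i ∧ (L i : EReal) < R j ∧ (L j : EReal) < R i := by
      intro j hj
      simpa only [hBb, Finset.mem_filter, Finset.mem_univ, true_and] using hj
    -- pairwise lower < upper
    have hPQ : ∀ j ∈ insert i S, ∀ k ∈ insert i (Bb \ S), (L j : EReal) < R k := by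
      intro j hj k hk
      rcases Finset.mem_insert.mp hj with rfl | hjS
      · rcases Finset.mem_insert.mp hk with rfl | hkB
        · exact hLR _
        · exact (hBmem k (Finset.mem_sdiff.mp hkB).1).2.1
      · rcases Finset.mem_insert.mp hk with rfl | hkB
        · exact (hBmem j (hSB hjS)).2.2
        · have hle : L j ≤ L k := hSmin j hjS k hkB
          calc (L j : EReal) ≤ (L k : EReal) := by exact_mod_cast hle
            _ < R k := hLR k
    -- find threshold t
    obtain ⟨j0, hj0, hj0eq⟩ := Finset.exists_mem_eq_sup' (Finset.insert_nonempty i S) L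
    obtain ⟨k0, hk0, hk0eq⟩ := Finset.exists_mem_eq_inf' (Finset.insert_nonempty i (Bb \ S)) R
    set α : ℝ := (insert i S).sup' (Finset.insert_nonempty i S) L with hα
    set β : EReal := (insert i (Bb \ S)).inf' (Finset.insert_nonempty i (Bb \ S)) R with hβ
    have hαβ : (α : EReal) < β := by
      rw [hj0eq, hk0eq]
      exact hPQ j0 hj0 k0 hk0
    obtain ⟨t, htα, htβ⟩ := EReal.lt_iff_exists_real_btwn.mp hαβ
    have hPt : ∀ j ∈ insert i S, L j < t := by
      intro j hj
      have h1 : L j ≤ α := Finset.le_sup' L hj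
      have h2 : (α : EReal) < (t : EReal) := htα
      have h3 : α < t := by exact_mod_cast h2
      exact lt_of_le_of_lt h1 h3
    have hQt : ∀ k ∈ insert i (Bb \ S), (t : EReal) < R k := by
      intro k hk
      exact lt_of_lt_of_le htβ (Finset.inf'_le R hk)
    have hLit : L i < t := hPt i (Finset.mem_insert_self _ _)
    have htRi : (t : EReal) < R i := hQt i (Finset.mem_insert_self _ _)
    -- target sets
    set lo : Fin n → ℝ := fun j => if j ∈ A ∪ S then L j else max (L j) t with hlo
    set hi : Fin n → EReal := fun j => if j ∈ A ∪ S then min (R j) (t : EReal) else R j with hhi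
    set T : Fin n → Set ℝ := fun j => {x : ℝ | lo j < x ∧ (x : EReal) < hi j} with hT
    have hTinf : ∀ j ∈ Finset.univ.erase i, (T j).Infinite := by
      intro j hj
      have hji : j ≠ i := (Finset.mem_erase.mp hj).1
      apply infinite_aux
      by_cases hjAS : j ∈ A ∪ S
      · simp only [hlo, hhi, hjAS, if_pos]
        apply lt_min (hLR j)
        rcases Finset.mem_union.mp hjAS with hjA | hjS
        · simp only [hA, Finset.mem_filter, Finset.mem_univ, true_and] at hjA
          have : (L j : EReal) < (L i : EReal) := lt_of_lt_of_le (hLR j) hjA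
          have h4 : L j < L i := by exact_mod_cast this
          exact_mod_cast lt_trans h4 hLit
        · exact_mod_cast hPt j (Finset.mem_insert_of_mem hjS)
      · simp only [hlo, hhi, hjAS, if_neg, not_false_iff]
        apply coe_max_lt (hLR j)
        by_cases hjB : j ∈ Bb
        · exact hQt j (Finset.mem_insert_of_mem (Finset.mem_sdiff.mpr
            ⟨hjB, fun h => hjAS (Finset.mem_union_right _ h)⟩))
        · -- j ∉ A, j ∉ Bb, j ≠ i: then R i ≤ L j
          have hjA : j ∉ A := fun h => hjAS (Finset.mem_union_left _ h)
          simp only [hA, Finset.mem_filter, Finset.mem_univ, true_and] at hjA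
          have hLiRj : (L i : EReal) < R j := not_le.mp hjA
          have hjB' : ¬((L j : EReal) < R i) := by
            intro h
            exact hjB (by simp only [hBb, Finset.mem_filter, Finset.mem_univ, true_and]
                          exact ⟨hji, hLiRj, h⟩)
          have hRiLj : R i ≤ (L j : EReal) := not_lt.mp hjB'
          calc (t : EReal) < R i := htRi
            _ ≤ (L j : EReal) := hRiLj
            _ < R j := hLR j
    obtain ⟨f, hfinj, hfmem⟩ := exists_injOn_choice (Finset.univ.erase i) T hTinf
    set w : Fin n → ℝ := Function.update f i t with hw
    have hwi : w i = t := Function.update_self i t f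
    have hwj : ∀ j : Fin n, j ≠ i → w j = f j := fun j hj => Function.update_of_ne hj t f
    have hmem_erase : ∀ j : Fin n, j ≠ i → j ∈ Finset.univ.erase i := fun j hj =>
      Finset.mem_erase.mpr ⟨hj, Finset.mem_univ _⟩
    have hbelow : ∀ j : Fin n, j ≠ i → j ∈ A ∪ S → f j < t := by
      intro j hj hjAS
      have := (hfmem j (hmem_erase j hj)).2
      simp only [hhi, hjAS, if_pos] at this
      have h5 : (f j : EReal) < (t : EReal) := lt_of_lt_of_le this (min_le_right _ _)
      exact_mod_cast h5
    have habove : ∀ j : Fin n, j ≠ i → j ∉ A ∪ S → t < f j := by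
      intro j hj hjAS
      have := (hfmem j (hmem_erase j hj)).1
      simp only [hlo, hjAS, if_neg, not_false_iff] at this
      exact lt_of_le_of_lt (le_max_right _ _) this
    have hfne : ∀ j : Fin n, j ≠ i → f j ≠ t := by
      intro j hj
      by_cases hjAS : j ∈ A ∪ S
      · exact ne_of_lt (hbelow j hj hjAS)
      · exact (ne_of_lt (habove j hj hjAS)).symm
    have hwinj : Function.Injective w := by
      intro a b hab
      by_cases ha : a = i <;> by_cases hb : b = i
      · rw [ha, hb]
      · rw [ha, hwi, hwj b hb] at hab
        exact absurd hab.symm (hfne b hb)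
      · rw [hb, hwi, hwj a ha] at hab
        exact absurd hab (hfne a ha)
      · rw [hwj a ha, hwj b hb] at hab
        exact hfinj (by simpa using hmem_erase a ha) (by simpa using hmem_erase b hb) hab
    have hwL : ∀ j : Fin n, L j < w j := by
      intro j
      by_cases hj : j = i
      · rw [hj, hwi]; exact hLit
      · rw [hwj j hj]
        have := (hfmem j (hmem_erase j hj)).1
        by_cases hjAS : j ∈ A ∪ S
        · simpa only [hlo, hjAS, if_pos] using this
        · simp only [hlo, hjAS, if_neg, not_false_iff] at this
          exact lt_of_le_of_lt (le_max_left _ _) this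
    have hwR : ∀ j : Fin n, (w j : EReal) ≤ R j := by
      intro j
      by_cases hj : j = i
      · rw [hj, hwi]; exact le_of_lt htRi
      · rw [hwj j hj]
        have := (hfmem j (hmem_erase j hj)).2
        by_cases hjAS : j ∈ A ∪ S
        · simp only [hhi, hjAS, if_pos] at this
          exact le_of_lt (lt_of_lt_of_le this (min_le_left _ _))
        · simp only [hhi, hjAS, if_neg, not_false_iff] at this
          exact le_of_lt this
    -- rank of i
    have hiAS : i ∉ A ∪ S := by
      simp only [Finset.mem_union]
      exact fun h => h.elim hiA hiS
    have hfilter : Finset.univ.filter (fun j => w j < w i) = A ∪ S := by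
      ext j
      simp only [Finset.mem_filter, Finset.mem_univ, true_and, hwi]
      by_cases hj : j = i
      · subst hj
        simp only [hwi]
        constructor
        · exact fun h => absurd h (lt_irrefl _)
        · exact fun h => absurd h hiAS
      · rw [hwj j hj]
        constructor
        · intro h
          by_contra hjAS
          exact absurd h (not_lt.mpr (le_of_lt (habove j hj hjAS)))
        · exact hbelow j hj
    have hAS : Disjoint A S := Finset.disjoint_of_subset_right hSB hABb
    have hAScard : (A ∪ S).card = A.card + m := by
      rw [Finset.card_union_of_disjoint hAS, hScard]
    obtain ⟨σ, hσ⟩ := rank_perm w hwinj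
    refine ⟨σ, ⟨w, hwinj, hwL, hwR, ?_⟩, ?_⟩
    · intro k
      rw [hσ k, natcard_eq_filter]
    · rw [hσ i, hfilter, hAScard]
      omega
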